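/- Let A be an amenable operator algebra. Then A has the total reduction property: for every continuous representation θ : A → B(H), every closed invariant subspace of H is topologically complemented by a closed invariant subspace. -/

import Mathlib

set_option linter.unusedSectionVars false
universe u
open scoped TensorProduct
open PiTensorProduct

noncomputable section
variable {H : Type u} [NormedAddCommGroup H] [InnerProductSpace ℂ H] [CompleteSpace H]

abbrev Dl (H : Type u) [NormedAddCommGroup H] [InnerProductSpace ℂ H] : Type u := H →L[ℂ] ℂ
abbrev Efam (H : Type u) [NormedAddCommGroup H] [InnerProductSpace ℂ H] : Bool → Type u :=
  fun b => Bool.rec (Dl H) H b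

noncomputable instance (b : Bool) : SeminormedAddCommGroup (Efam H b) := by
  cases b
  · exact inferInstanceAs (SeminormedAddCommGroup (Dl H))
  · exact inferInstanceAs (SeminormedAddCommGroup H)
noncomputable instance (b : Bool) : NormedSpace ℂ (Efam H b) := by
  cases b
  · exact inferInstanceAs (NormedSpace ℂ (Dl H))
  · exact inferInstanceAs (NormedSpace ℂ H)

abbrev X0 (H : Type u) [NormedAddCommGroup H] [InnerProductSpace ℂ H] : Type u := ⨂[ℂ] b, Efam H b
abbrev Xq (H : Type u) [NormedAddCommGroup H] [InnerProductSpace ℂ H] : Type u :=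
  SeparationQuotient (X0 H)


section liftCLM
variable {M : Type*} [SeminormedAddCommGroup M] [NormedSpace ℂ M]
variable {G : Type*} [NormedAddCommGroup G] [NormedSpace ℂ G]

/-- Lift a CLM through the separation quotient. -/
def liftCLM (g : M →L[ℂ] G) : SeparationQuotient M →L[ℂ] G where
  toFun := SeparationQuotient.lift g (fun x y h => by
    have h0 : ‖x - y‖ = 0 := by
      have := Metric.inseparable_iff.mp h
      rwa [dist_eq_norm] at this
    have : ‖g x - g y‖ = 0 := le_antisymm (by
      calc ‖g x - g y‖ = ‖g (x - y)‖ := by rw [map_sub]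
        _ ≤ ‖g‖ * ‖x - y‖ := g.le_opNorm _
        _ = 0 := by rw [h0, mul_zero]) (norm_nonneg _)
    rw [← sub_eq_zero]
    exact norm_eq_zero.mp this)
  map_add' := by
    rintro ⟨x⟩ ⟨y⟩
    exact map_add g x y
  map_smul' := by
    rintro c ⟨x⟩
    exact map_smul g c x
  cont := SeparationQuotient.continuous_lift_iff.mpr g.cont

@[simp] lemma liftCLM_mk (g : M →L[ℂ] G) (x : M) :
    liftCLM g (SeparationQuotient.mk x) = g x := rfl

lemma liftCLM_norm_le (g : M →L[ℂ] G) : ‖liftCLM g‖ ≤ ‖g‖ := by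
  refine ContinuousLinearMap.opNorm_le_bound _ (norm_nonneg g) ?_
  rintro ⟨x⟩
  exact g.le_opNorm x

/-- `liftCLM` as a linear map. -/
def liftCLML : (M →L[ℂ] G) →ₗ[ℂ] (SeparationQuotient M →L[ℂ] G) where
  toFun := liftCLM
  map_add' g g' := by ext ⟨x⟩; rfl
  map_smul' c g := by ext ⟨x⟩; rfl

@[simp] lemma liftCLML_mk (g : M →L[ℂ] G) (x : M) :
    liftCLML g (SeparationQuotient.mk x) = g x := rfl
end liftCLM


def mfun (x : H) (φ : Dl H) : ∀ b, Efam H b := fun b => Bool.rec φ x b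

lemma mfun_eq (m : ∀ b, Efam H b) : m = mfun (m true) (m false) := by
  funext b; cases b <;> rfl

lemma mfun_update_true (x y : H) (φ : Dl H) :
    Function.update (mfun x φ) true y = mfun y φ := by
  funext b; cases b <;> simp [mfun, Function.update]

lemma mfun_update_false (x : H) (φ ψ : Dl H) :
    Function.update (mfun x φ) false ψ = mfun x ψ := by
  funext b; cases b <;> simp [mfun, Function.update]

def τ (x : H) (φ : Dl H) : Xq H := SeparationQuotient.mk (tprod ℂ (mfun x φ))

lemma τ_add_left (x y : H) (φ : Dl H) : τ (x + y) φ = τ x φ + τ y φ := by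
  have h := MultilinearMap.map_update_add (tprod ℂ (s := Efam H)) (mfun x φ) true x y
  rw [mfun_update_true, mfun_update_true, mfun_update_true] at h
  simp only [τ, h, SeparationQuotient.mk_add]

lemma τ_smul_left (c : ℂ) (x : H) (φ : Dl H) : τ (c • x) φ = c • τ x φ := by
  have h := MultilinearMap.map_update_smul (tprod ℂ (s := Efam H)) (mfun x φ) true c x
  rw [mfun_update_true, mfun_update_true] at h
  simp only [τ, h, SeparationQuotient.mk_smul]

lemma τ_add_right (x : H) (φ ψ : Dl H) : τ x (φ + ψ) = τ x φ + τ x ψ := by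
  have h := MultilinearMap.map_update_add (tprod ℂ (s := Efam H)) (mfun x φ) false φ ψ
  rw [mfun_update_false, mfun_update_false, mfun_update_false] at h
  simp only [τ, h, SeparationQuotient.mk_add]

lemma τ_smul_right (c : ℂ) (x : H) (φ : Dl H) : τ x (c • φ) = c • τ x φ := by
  have h := MultilinearMap.map_update_smul (tprod ℂ (s := Efam H)) (mfun x φ) false c φ
  rw [mfun_update_false, mfun_update_false] at h
  simp only [τ, h, SeparationQuotient.mk_smul]

lemma τ_norm_le (x : H) (φ : Dl H) : ‖τ x φ‖ ≤ ‖x‖ * ‖φ‖ := by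
  have h := projectiveSeminorm_tprod_le (𝕜 := ℂ) (mfun x φ)
  have : ‖tprod ℂ (mfun x φ)‖ ≤ ∏ b, ‖mfun x φ b‖ := h
  rw [Fintype.prod_bool] at this
  exact le_trans (le_of_eq (SeparationQuotient.norm_mk _)) this

/-- extensionality for CLMs out of `Xq H`. -/
lemma Xq_ext {G : Type*} [NormedAddCommGroup G] [NormedSpace ℂ G]
    (g g' : Xq H →L[ℂ] G) (h : ∀ x φ, g (τ x φ) = g' (τ x φ)) : g = g' := by
  ext z
  obtain ⟨u, rfl⟩ := SeparationQuotient.surjective_mk z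
  induction u using PiTensorProduct.induction_on' with
  | tprodCoeff r m =>
      have hm : (tprod ℂ m : X0 H) = tprod ℂ (mfun (m true) (m false)) := by
        exact congrArg _ (mfun_eq m)
      rw [tprodCoeff_eq_smul_tprod, SeparationQuotient.mk_smul, map_smul, map_smul, hm]
      exact congrArg (r • ·) (h (m true) (m false))
  | add u v hu hv =>
      rw [SeparationQuotient.mk_add, map_add, map_add, hu, hv]
/-! ### pairing functional -/

/-- the multilinear pairing `(x, φ) ↦ φ (T x)`. -/
def pairML (T : H →L[ℂ] H) : MultilinearMap ℂ (Efam H) ℂ where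
  toFun m := m false (T (m true))
  map_update_add' m b x y := by
    cases b with
    | false =>
        simp only [Function.update_self, Function.update_of_ne (fun h => Bool.noConfusion h : (true:Bool) ≠ false)]
        exact ContinuousLinearMap.add_apply x y (T (m true))
    | true => simp [Function.update]
  map_update_smul' m b c x := by
    cases b with
    | false =>
        simp only [Function.update_self, Function.update_of_ne (fun h => Bool.noConfusion h : (true:Bool) ≠ false)]
        exact (ContinuousLinearMap.smul_apply (M := ℂ) (F := Dl H) x c (T (m true))).trans (smul_eq_mul _ _)
    | true => simp [Function.update]

lemma pairML_bound (T : H →L[ℂ] H) (m : ∀ b, Efam H b) :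
    ‖pairML T m‖ ≤ ‖T‖ * ∏ b, ‖m b‖ := by
  rw [Fintype.prod_bool]
  calc ‖(m false) (T (m true))‖ ≤ ‖m false‖ * ‖T (m true)‖ :=
        (m false).le_opNorm _
    _ ≤ ‖m false‖ * (‖T‖ * ‖m true‖) := by
        gcongr; exact T.le_opNorm _
    _ = ‖T‖ * (‖m true‖ * ‖m false‖) := by ring

/-- the continuous multilinear pairing. -/
def pairCML (T : H →L[ℂ] H) : ContinuousMultilinearMap ℂ (Efam H) ℂ :=
  (pairML T).mkContinuous ‖T‖ (pairML_bound T)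

/-- the functional on `Xq H` induced by an operator `T`. -/
def Ff (T : H →L[ℂ] H) : Xq H →L[ℂ] ℂ :=
  liftCLM (liftIsometry ℂ (Efam H) ℂ (pairCML T))

@[simp] lemma Ff_τ (T : H →L[ℂ] H) (x : H) (φ : Dl H) :
    Ff T (τ x φ) = φ (T x) := by
  simp only [Ff, τ, liftCLM_mk, liftIsometry_apply_apply, lift.tprod]
  rfl

lemma Ff_norm_le (T : H →L[ℂ] H) : ‖Ff T‖ ≤ ‖T‖ := by
  refine le_trans (liftCLM_norm_le _) ?_
  rw [(liftIsometry ℂ (Efam H) ℂ).norm_map]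
  exact (pairML T).mkContinuous_norm_le (norm_nonneg T) _

/-- `Ff` as a linear map in `T`. -/
def FfL : (H →L[ℂ] H) →ₗ[ℂ] (Xq H →L[ℂ] ℂ) where
  toFun := Ff
  map_add' T T' := by
    refine Xq_ext _ _ (fun x φ => ?_)
    simp [Ff_τ, ContinuousLinearMap.add_apply, map_add]
  map_smul' c T := by
    refine Xq_ext _ _ (fun x φ => ?_)
    simp [Ff_τ, ContinuousLinearMap.smul_apply, map_smul]

/-! ### the module actions -/

/-- family of operators on the two factors -/
def fam (g1 : H →L[ℂ] H) (g2 : Dl H →L[ℂ] Dl H) : ∀ b, Efam H b →L[ℂ] Efam H b :=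
  fun b => Bool.rec g2 g1 b

/-- the operator on `Xq H` induced by a pair of operators. -/
def mapX (g1 : H →L[ℂ] H) (g2 : Dl H →L[ℂ] Dl H) : Xq H →L[ℂ] Xq H :=
  liftCLM ((SeparationQuotient.mkCLM ℂ (X0 H)).comp (mapL (fam g1 g2)))

@[simp] lemma mapX_τ (g1 : H →L[ℂ] H) (g2 : Dl H →L[ℂ] Dl H) (x : H) (φ : Dl H) :
    mapX g1 g2 (τ x φ) = τ (g1 x) (g2 φ) := by
  simp only [mapX, τ, liftCLM_mk, ContinuousLinearMap.comp_apply, mapL_apply, map_tprod,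
    SeparationQuotient.mkCLM_apply]
  congr 1
  refine congrArg _ (funext fun b => ?_)
  cases b <;> rfl

lemma mapX_norm_le (g1 : H →L[ℂ] H) (g2 : Dl H →L[ℂ] Dl H) :
    ‖mapX g1 g2‖ ≤ ‖g1‖ * ‖g2‖ := by
  refine le_trans (liftCLM_norm_le _) ?_
  refine le_trans (ContinuousLinearMap.opNorm_comp_le _ _) ?_
  have h1 : ‖SeparationQuotient.mkCLM ℂ (X0 H)‖ ≤ 1 := by
    refine ContinuousLinearMap.opNorm_le_bound _ zero_le_one (fun u => ?_)
    simp [SeparationQuotient.norm_mk]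
  have h2 : ‖mapL (𝕜 := ℂ) (fam g1 g2)‖ ≤ ‖g1‖ * ‖g2‖ := by
    refine le_trans (opNorm_mapL _) (le_of_eq ?_)
    rw [Fintype.prod_bool]; rfl
  calc ‖SeparationQuotient.mkCLM ℂ (X0 H)‖ * ‖mapL (𝕜 := ℂ) (fam g1 g2)‖
      ≤ 1 * (‖g1‖ * ‖g2‖) := by
        exact mul_le_mul h1 h2 (norm_nonneg _) zero_le_one
    _ = ‖g1‖ * ‖g2‖ := one_mul _

/-! ### the operator-theoretic part -/

section main

variable {A : Type u} [NormedRing A] [NormedAlgebra ℂ A] [CompleteSpace A]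
variable (θ : A →ₐ[ℂ] (H →L[ℂ] H)) (V : Submodule ℂ H) [CompleteSpace V]

/-- orthogonal projection onto `V` as an endomorphism of `H`. -/
def Pj : H →L[ℂ] H := V.subtypeL.comp (V.orthogonalProjectionOnto)

/-- complementary "projection". -/
def Nj : H →L[ℂ] H := ContinuousLinearMap.id ℂ H - Pj V

lemma Pj_mem (x : H) : Pj V x ∈ V := (V.orthogonalProjectionOnto x).2

lemma Pj_fix (x : H) (hx : x ∈ V) : Pj V x = x := (Submodule.starProjection_eq_self_iff (K := V)).mpr hx

lemma Pj_idem (x : H) : Pj V (Pj V x) = Pj V x := Pj_fix V _ (Pj_mem V x)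

lemma Nj_apply (x : H) : Nj V x = x - Pj V x := rfl

lemma Pj_add_Nj (x : H) : Pj V x + Nj V x = x := by
  rw [Nj_apply V, add_sub_cancel]

lemma Nj_idem (x : H) : Nj V (Nj V x) = Nj V x := by
  rw [Nj_apply V (Nj V x), Nj_apply V x, map_sub (Pj V), Pj_idem V, sub_self, sub_zero]

/-- left corner operator `(1-P) θ(a) (1-P)`. -/
def cLop (a : A) : H →L[ℂ] H := (Nj V).comp ((θ a).comp (Nj V))
/-- corner operator `P θ(a) P`. -/
def cPop (a : A) : H →L[ℂ] H := (Pj V).comp ((θ a).comp (Pj V))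
/-- the derivation corner `P θ(a) (1-P)`. -/
def dDop (a : A) : H →L[ℂ] H := (Pj V).comp ((θ a).comp (Nj V))

lemma cLop_apply (a : A) (x : H) : cLop θ V a x = Nj V (θ a (Nj V x)) := rfl
lemma cPop_apply (a : A) (x : H) : cPop θ V a x = Pj V (θ a (Pj V x)) := rfl
lemma dDop_apply (a : A) (x : H) : dDop θ V a x = Pj V (θ a (Nj V x)) := rfl

/-- precomposition on the dual. -/
def rD (S : H →L[ℂ] H) : Dl H →L[ℂ] Dl H :=
  LinearMap.mkContinuous
    { toFun := fun φ => φ.comp S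
      map_add' := fun φ ψ => by ext z; simp
      map_smul' := fun c φ => by ext z; simp }
    ‖S‖ (fun φ => by
      refine le_trans (ContinuousLinearMap.opNorm_comp_le φ S) (le_of_eq (mul_comm _ _)))

lemma rD_apply (S : H →L[ℂ] H) (φ : Dl H) : rD S φ = φ.comp S := rfl

lemma rD_norm_le (S : H →L[ℂ] H) : ‖rD (H := H) S‖ ≤ ‖S‖ :=
  LinearMap.mkContinuous_norm_le _ (norm_nonneg S) _

/-- the derivation identity for the corners (no invariance needed). -/
lemma dDop_deriv (a b : A) (x : H) :
    dDop θ V (a * b) x = cPop θ V a (dDop θ V b x) + dDop θ V a (cLop θ V b x) := by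
  simp only [dDop_apply, cPop_apply, cLop_apply]
  rw [Pj_idem, Nj_idem, ← map_add (Pj V), ← map_add (θ a), Pj_add_Nj, _root_.map_mul,
    ContinuousLinearMap.mul_apply]

variable (hVinv : ∀ a : A, ∀ x ∈ V, θ a x ∈ V)

section invariance
include hVinv

lemma Pj_inv (a : A) (x : H) : Pj V (θ a (Pj V x)) = θ a (Pj V x) :=
  Pj_fix V _ (hVinv a _ (Pj_mem V x))

lemma Nj_θ_Pj (a : A) (x : H) : Nj V (θ a (Pj V x)) = 0 := by
  rw [Nj_apply V, Pj_inv θ V hVinv, sub_self]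

lemma Nj_θ_Nj (a : A) (x : H) : Nj V (θ a (Nj V x)) = Nj V (θ a x) := by
  have h : θ a x = θ a (Pj V x) + θ a (Nj V x) := by
    rw [← map_add, Pj_add_Nj]
  rw [h, map_add, Nj_θ_Pj θ V hVinv, zero_add]

lemma cLop_mul (a b : A) (x : H) :
    cLop θ V (a * b) x = cLop θ V a (cLop θ V b x) := by
  simp only [cLop_apply]
  rw [Nj_idem V, Nj_θ_Nj θ V hVinv b x, Nj_θ_Nj θ V hVinv a (θ b x),
    Nj_θ_Nj θ V hVinv (a * b) x, _root_.map_mul, ContinuousLinearMap.mul_apply]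

lemma cPop_mul (a b : A) (x : H) :
    cPop θ V (a * b) x = cPop θ V a (cPop θ V b x) := by
  simp only [cPop_apply]
  rw [Pj_idem V, Pj_inv θ V hVinv b x, _root_.map_mul, ContinuousLinearMap.mul_apply]

end invariance

end main

/-! ### the main theorem -/

lemma dual_sep {H : Type u} [NormedAddCommGroup H] [InnerProductSpace ℂ H]
    [CompleteSpace H] (u v : H) (h : ∀ φ : Dl H, φ u = φ v) : u = v := by
  have h2 := h (InnerProductSpace.toDual ℂ H (u - v))
  rw [InnerProductSpace.toDual_apply_apply, InnerProductSpace.toDual_apply_apply] at h2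
  have h3 : (inner ℂ (u - v) (u - v) : ℂ) = 0 := by
    rw [inner_sub_right, h2, sub_self]
  rw [← sub_eq_zero]
  exact inner_self_eq_zero.mp h3

set_option maxHeartbeats 1000000 in
theorem amenable_implies_totalReduction
    {A : Type u} [NormedRing A] [NormedAlgebra ℂ A] [CompleteSpace A]
    (hamen : ∀ (X : Type u) [NormedAddCommGroup X] [NormedSpace ℂ X],
      ∀ L R : A →ₗ[ℂ] (X →L[ℂ] X), Continuous (⇑L) → Continuous (⇑R) →
      (∀ a b : A, L (a * b) = (L a).comp (L b)) →
      (∀ a b : A, R (a * b) = (R b).comp (R a)) →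
      (∀ a b : A, (L a).comp (R b) = (R b).comp (L a)) →
      ∀ δ : A →ₗ[ℂ] (X →L[ℂ] ℂ), Continuous (⇑δ) →
      (∀ a b : A, δ (a * b) = (δ b).comp (R a) + (δ a).comp (L b)) →
      ∃ f : X →L[ℂ] ℂ, ∀ a : A, δ a = f.comp (R a) - f.comp (L a)) :
    ∀ (H : Type u) [NormedAddCommGroup H] [InnerProductSpace ℂ H] [CompleteSpace H],
      ∀ θ : A →ₐ[ℂ] (H →L[ℂ] H), Continuous (⇑θ) →
      ∀ V : Submodule ℂ H, IsClosed (V : Set H) → (∀ a : A, ∀ x ∈ V, θ a x ∈ V) →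
      ∃ W : Submodule ℂ H, IsClosed (W : Set H) ∧ (∀ a : A, ∀ x ∈ W, θ a x ∈ W) ∧
        V ⊓ W = ⊥ ∧ V ⊔ W = ⊤ := by
  intro H _ _ _ θ hθ V hVc hVinv
  haveI : CompleteSpace V := hVc.completeSpace_coe
  -- the continuous linear version of θ, for norm bounds
  let θ' : A →L[ℂ] (H →L[ℂ] H) := ⟨θ.toLinearMap, hθ⟩
  have hθ'a : ∀ a : A, θ' a = θ a := fun a => rfl
  have hcomp3 : ∀ (U W : H →L[ℂ] H) (a : A),
      ‖U.comp ((θ a).comp W)‖ ≤ ‖U‖ * ‖θ'‖ * ‖W‖ * ‖a‖ := by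
    intro U W a
    calc ‖U.comp ((θ a).comp W)‖ ≤ ‖U‖ * ‖(θ a).comp W‖ :=
          ContinuousLinearMap.opNorm_comp_le _ _
      _ ≤ ‖U‖ * (‖θ a‖ * ‖W‖) := by
          gcongr
          exact ContinuousLinearMap.opNorm_comp_le _ _
      _ ≤ ‖U‖ * ((‖θ'‖ * ‖a‖) * ‖W‖) := by
          gcongr
          exact θ'.le_opNorm a
      _ = ‖U‖ * ‖θ'‖ * ‖W‖ * ‖a‖ := by ring
  -- the three structure maps
  let LL : A →ₗ[ℂ] (Xq H →L[ℂ] Xq H) :=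
    { toFun := fun a => mapX (cLop θ V a) (ContinuousLinearMap.id ℂ (Dl H))
      map_add' := fun a b => by
        refine Xq_ext _ _ (fun x φ => ?_)
        simp only [mapX_τ, ContinuousLinearMap.add_apply, ContinuousLinearMap.coe_id', id_eq]
        rw [show cLop θ V (a + b) x = cLop θ V a x + cLop θ V b x by
          simp only [cLop_apply]; rw [map_add θ]; simp [ContinuousLinearMap.add_apply]]
        rw [τ_add_left]
      map_smul' := fun c a => by
        refine Xq_ext _ _ (fun x φ => ?_)
        simp only [mapX_τ, RingHom.id_apply, ContinuousLinearMap.smul_apply,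
          ContinuousLinearMap.coe_id', id_eq]
        rw [show cLop θ V (c • a) x = c • cLop θ V a x by
          simp only [cLop_apply]; rw [map_smul θ]; simp [ContinuousLinearMap.smul_apply]]
        rw [τ_smul_left] }
  let RR : A →ₗ[ℂ] (Xq H →L[ℂ] Xq H) :=
    { toFun := fun a => mapX (ContinuousLinearMap.id ℂ H) (rD (cPop θ V a))
      map_add' := fun a b => by
        refine Xq_ext _ _ (fun x φ => ?_)
        simp only [mapX_τ, ContinuousLinearMap.add_apply, ContinuousLinearMap.coe_id', id_eq]
        rw [show rD (cPop θ V (a + b)) φ = rD (cPop θ V a) φ + rD (cPop θ V b) φ by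
          ext z
          simp only [rD_apply, ContinuousLinearMap.comp_apply, ContinuousLinearMap.add_apply,
            cPop_apply]
          rw [map_add θ]
          simp [ContinuousLinearMap.add_apply]]
        rw [τ_add_right]
      map_smul' := fun c a => by
        refine Xq_ext _ _ (fun x φ => ?_)
        simp only [mapX_τ, RingHom.id_apply, ContinuousLinearMap.smul_apply,
          ContinuousLinearMap.coe_id', id_eq]
        rw [show rD (cPop θ V (c • a)) φ = c • rD (cPop θ V a) φ by
          ext z
          simp only [rD_apply, ContinuousLinearMap.comp_apply, ContinuousLinearMap.smul_apply,
            cPop_apply]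
          rw [map_smul θ]
          simp [ContinuousLinearMap.smul_apply]]
        rw [τ_smul_right] }
  let δδ : A →ₗ[ℂ] (Xq H →L[ℂ] ℂ) :=
    { toFun := fun a => Ff (dDop θ V a)
      map_add' := fun a b => by
        change Ff (dDop θ V (a + b)) = Ff (dDop θ V a) + Ff (dDop θ V b)
        rw [show dDop θ V (a + b) = dDop θ V a + dDop θ V b by
          ext z; simp only [dDop_apply, ContinuousLinearMap.add_apply]
          rw [map_add θ]; simp [ContinuousLinearMap.add_apply]]
        exact FfL.map_add _ _
      map_smul' := fun c a => by
        change Ff (dDop θ V (c • a)) = c • Ff (dDop θ V a)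
        rw [show dDop θ V (c • a) = c • dDop θ V a by
          ext z; simp only [dDop_apply, ContinuousLinearMap.smul_apply]
          rw [map_smul θ]; simp [ContinuousLinearMap.smul_apply]]
        exact FfL.map_smul _ _ }
  have hLτ : ∀ (a : A) (x : H) (φ : Dl H), LL a (τ x φ) = τ (cLop θ V a x) φ := by
    intro a x φ
    show mapX _ _ (τ x φ) = _
    rw [mapX_τ]
    rfl
  have hRτ : ∀ (a : A) (x : H) (φ : Dl H), RR a (τ x φ) = τ x (φ.comp (cPop θ V a)) := by
    intro a x φ
    show mapX _ _ (τ x φ) = _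
    rw [mapX_τ]
    rfl
  have hδτ : ∀ (a : A) (x : H) (φ : Dl H), δδ a (τ x φ) = φ (dDop θ V a x) := by
    intro a x φ
    exact Ff_τ _ _ _
  -- continuity of the three maps
  have hLcont : Continuous (⇑LL) := by
    refine AddMonoidHomClass.continuous_of_bound LL (‖Nj V‖ * ‖θ'‖ * ‖Nj V‖) (fun a => ?_)
    refine le_trans (mapX_norm_le _ _) ?_
    calc ‖cLop θ V a‖ * ‖ContinuousLinearMap.id ℂ (Dl H)‖
        ≤ (‖Nj V‖ * ‖θ'‖ * ‖Nj V‖ * ‖a‖) * 1 := by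
          exact mul_le_mul (hcomp3 _ _ a) ContinuousLinearMap.norm_id_le
            (norm_nonneg (ContinuousLinearMap.id ℂ (Dl H))) (by positivity)
      _ = ‖Nj V‖ * ‖θ'‖ * ‖Nj V‖ * ‖a‖ := mul_one _
  have hRcont : Continuous (⇑RR) := by
    refine AddMonoidHomClass.continuous_of_bound RR (‖Pj V‖ * ‖θ'‖ * ‖Pj V‖) (fun a => ?_)
    refine le_trans (mapX_norm_le _ _) ?_
    calc ‖ContinuousLinearMap.id ℂ H‖ * ‖rD (cPop θ V a)‖
        ≤ 1 * (‖Pj V‖ * ‖θ'‖ * ‖Pj V‖ * ‖a‖) := by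
          exact mul_le_mul ContinuousLinearMap.norm_id_le
            (le_trans (rD_norm_le _) (hcomp3 _ _ a)) (norm_nonneg (rD (cPop θ V a))) zero_le_one
      _ = ‖Pj V‖ * ‖θ'‖ * ‖Pj V‖ * ‖a‖ := one_mul _
  have hδcont : Continuous (⇑δδ) := by
    refine AddMonoidHomClass.continuous_of_bound δδ (‖Pj V‖ * ‖θ'‖ * ‖Nj V‖) (fun a => ?_)
    exact le_trans (Ff_norm_le _) (hcomp3 _ _ a)
  -- the algebraic identities
  have hLmul : ∀ a b : A, LL (a * b) = (LL a).comp (LL b) := by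
    intro a b
    refine Xq_ext _ _ (fun x φ => ?_)
    rw [ContinuousLinearMap.comp_apply, hLτ, hLτ, hLτ, cLop_mul θ V hVinv]
  have hRmul : ∀ a b : A, RR (a * b) = (RR b).comp (RR a) := by
    intro a b
    refine Xq_ext _ _ (fun x φ => ?_)
    rw [ContinuousLinearMap.comp_apply, hRτ, hRτ, hRτ]
    congr 1
    ext z
    simp only [ContinuousLinearMap.comp_apply]
    exact congrArg φ (cPop_mul θ V hVinv a b z)
  have hLRcomm : ∀ a b : A, (LL a).comp (RR b) = (RR b).comp (LL a) := by
    intro a b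
    refine Xq_ext _ _ (fun x φ => ?_)
    rw [ContinuousLinearMap.comp_apply, ContinuousLinearMap.comp_apply, hRτ, hLτ, hLτ, hRτ]
  have hderiv : ∀ a b : A, δδ (a * b) = (δδ b).comp (RR a) + (δδ a).comp (LL b) := by
    intro a b
    refine Xq_ext _ _ (fun x φ => ?_)
    rw [ContinuousLinearMap.add_apply, ContinuousLinearMap.comp_apply,
      ContinuousLinearMap.comp_apply, hRτ, hLτ, hδτ, hδτ, hδτ, dDop_deriv θ V a b x, map_add]
    rfl
  -- apply amenability
  obtain ⟨f, hf⟩ := hamen (Xq H) LL RR hLcont hRcont hLmul hRmul hLRcomm δδ hδcont hderiv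
  -- reconstruct the operator T from the functional f
  let gx : H → Dl H := fun x =>
    LinearMap.mkContinuous
      { toFun := fun w => (starRingEnd ℂ) (f (τ x (InnerProductSpace.toDual ℂ H w)))
        map_add' := fun w w' => by
          beta_reduce
          rw [map_add (InnerProductSpace.toDual ℂ H), τ_add_right, map_add f, map_add]
        map_smul' := fun c w => by
          show (starRingEnd ℂ) (f (τ x (InnerProductSpace.toDual ℂ H (c • w)))) =
            (RingHom.id ℂ) c • (starRingEnd ℂ) (f (τ x (InnerProductSpace.toDual ℂ H w)))
          rw [LinearIsometryEquiv.map_smulₛₗ, τ_smul_right, map_smul, smul_eq_mul, _root_.map_mul,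
            RingHom.id_apply, starRingEnd_self_apply, smul_eq_mul] }
      (‖f‖ * ‖x‖) (fun w => by
        simp only [LinearMap.coe_mk, AddHom.coe_mk]
        rw [RCLike.norm_conj]
        calc ‖f (τ x (InnerProductSpace.toDual ℂ H w))‖
            ≤ ‖f‖ * ‖τ x (InnerProductSpace.toDual ℂ H w)‖ := f.le_opNorm _
          _ ≤ ‖f‖ * (‖x‖ * ‖InnerProductSpace.toDual ℂ H w‖) := by
              gcongr
              exact τ_norm_le _ _
          _ = ‖f‖ * ‖x‖ * ‖w‖ := by
              rw [LinearIsometryEquiv.norm_map]; ring)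
  have hgx : ∀ (x w : H),
      gx x w = (starRingEnd ℂ) (f (τ x (InnerProductSpace.toDual ℂ H w))) := fun x w => rfl
  have hgx_norm : ∀ x : H, ‖gx x‖ ≤ ‖f‖ * ‖x‖ := fun x =>
    LinearMap.mkContinuous_norm_le _ (by positivity) _
  let T : H →L[ℂ] H :=
    LinearMap.mkContinuous
      { toFun := fun x => (InnerProductSpace.toDual ℂ H).symm (gx x)
        map_add' := fun x x' => by
          have hg : gx (x + x') = gx x + gx x' := by
            ext w
            rw [ContinuousLinearMap.add_apply, hgx, hgx, hgx, τ_add_left, map_add f, map_add]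
          show (InnerProductSpace.toDual ℂ H).symm (gx (x + x')) =
            (InnerProductSpace.toDual ℂ H).symm (gx x) +
              (InnerProductSpace.toDual ℂ H).symm (gx x')
          rw [hg, map_add]
        map_smul' := fun c x => by
          have hg : gx (c • x) = (starRingEnd ℂ) c • gx x := by
            ext w
            rw [ContinuousLinearMap.smul_apply, hgx, hgx, τ_smul_left, map_smul f, smul_eq_mul,
              _root_.map_mul, smul_eq_mul]
          show (InnerProductSpace.toDual ℂ H).symm (gx (c • x)) =
            (RingHom.id ℂ) c • (InnerProductSpace.toDual ℂ H).symm (gx x)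
          rw [hg, LinearIsometryEquiv.map_smulₛₗ, starRingEnd_self_apply, RingHom.id_apply]}
      ‖f‖ (fun x => by
        show ‖(InnerProductSpace.toDual ℂ H).symm (gx x)‖ ≤ ‖f‖ * ‖x‖
        rw [LinearIsometryEquiv.norm_map]
        exact hgx_norm x)
  have hTdef : ∀ x : H, T x = (InnerProductSpace.toDual ℂ H).symm (gx x) := fun x => rfl
  -- the fundamental property of T
  have hfτ : ∀ (x : H) (φ : Dl H), f (τ x φ) = φ (T x) := by
    intro x φ
    set w := (InnerProductSpace.toDual ℂ H).symm φ with hw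
    have hφ : InnerProductSpace.toDual ℂ H w = φ := by
      rw [hw, LinearIsometryEquiv.apply_symm_apply]
    have h1 : (inner ℂ (T x) w : ℂ) = gx x w := by
      rw [hTdef]
      exact InnerProductSpace.toDual_symm_apply
    have h2 : φ (T x) = (inner ℂ w (T x) : ℂ) := by
      rw [← hφ, InnerProductSpace.toDual_apply_apply]
    rw [h2, ← inner_conj_symm, h1, hgx, hφ, starRingEnd_self_apply]
  -- the key operator identity
  have key : ∀ (a : A) (x : H),
      dDop θ V a x = cPop θ V a (T x) - T (cLop θ V a x) := by
    intro a x
    refine dual_sep _ _ (fun φ => ?_)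
    have h1 := congrArg (fun (g : Xq H →L[ℂ] ℂ) => g (τ x φ)) (hf a)
    simp only [ContinuousLinearMap.sub_apply, ContinuousLinearMap.comp_apply] at h1
    rw [hδτ, hRτ, hLτ, hfτ, hfτ] at h1
    rw [map_sub φ]
    rw [h1]
    rfl
  -- iterated pointwise facts
  have hNθN : ∀ (a : A) (x : H), Nj V (θ a (Nj V x)) = Nj V (θ a x) :=
    Nj_θ_Nj θ V hVinv
  have hPinv : ∀ (a : A) (x : H), Pj V (θ a (Pj V x)) = θ a (Pj V x) :=
    Pj_inv θ V hVinv
  -- the idempotent Q commuting with the action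
  let Q : H →L[ℂ] H := Pj V + (Pj V).comp (T.comp (Nj V))
  have hQ : ∀ x : H, Q x = Pj V x + Pj V (T (Nj V x)) := fun x => rfl
  have hQmem : ∀ x : H, Q x ∈ V := fun x => by
    rw [hQ]
    exact V.add_mem (Pj_mem V x) (Pj_mem V _)
  have hQfix : ∀ x : H, x ∈ V → Q x = x := by
    intro x hx
    rw [hQ, Pj_fix V x hx, show Nj V x = 0 by rw [Nj_apply V, Pj_fix V x hx, sub_self]]
    rw [map_zero, map_zero, add_zero]
  -- key compressed identity
  have key2 : ∀ (a : A) (x : H),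
      Pj V (θ a (Nj V x)) =
        Pj V (θ a (Pj V (T (Nj V x)))) - Pj V (T (Nj V (θ a (Nj V x)))) := by
    intro a x
    have h := key a (Nj V x)
    rw [dDop_apply, cPop_apply, cLop_apply, Nj_idem V] at h
    have h2 := congrArg (Pj V) h
    rw [map_sub (Pj V), Pj_idem V] at h2
    rw [h2, Pj_idem V]
  have hQcomm : ∀ (a : A) (x : H), Q (θ a x) = θ a (Q x) := by
    intro a x
    rw [hQ, hQ]
    have e1 : Nj V (θ a x) = Nj V (θ a (Nj V x)) := (hNθN a x).symm
    have key3 : Pj V (T (Nj V (θ a (Nj V x)))) =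
        Pj V (θ a (Pj V (T (Nj V x)))) - Pj V (θ a (Nj V x)) := by
      rw [key2 a x]
      abel
    rw [e1, key3]
    have e2 : Pj V (θ a x) = Pj V (θ a (Pj V x)) + Pj V (θ a (Nj V x)) := by
      rw [← map_add (Pj V), ← map_add (θ a), Pj_add_Nj]
    have e3 : Pj V (θ a (Pj V (T (Nj V x)))) = θ a (Pj V (T (Nj V x))) :=
      hPinv a (T (Nj V x))
    rw [e2, hPinv a x, e3, map_add (θ a)]
    abel
  -- define the complement
  refine ⟨LinearMap.ker (Q : H →ₗ[ℂ] H), ?_, ?_, ?_, ?_⟩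
  · exact ContinuousLinearMap.isClosed_ker Q
  · intro a x hx
    have hx0 : Q x = 0 := LinearMap.mem_ker.mp hx
    refine LinearMap.mem_ker.mpr ?_
    rw [ContinuousLinearMap.coe_coe, hQcomm a x, hx0, map_zero]
  · refine le_bot_iff.mp ?_
    intro x hx
    obtain ⟨hxV, hxW⟩ := Submodule.mem_inf.mp hx
    have h1 : Q x = x := hQfix x hxV
    have h2 : Q x = 0 := LinearMap.mem_ker.mp hxW
    simpa [h1.symm.trans h2] using h2 ▸ h1.symm
  · refine top_le_iff.mp ?_
    intro x _
    refine Submodule.mem_sup.mpr ⟨Q x, hQmem x, x - Q x, ?_, by abel⟩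
    refine LinearMap.mem_ker.mpr ?_
    rw [ContinuousLinearMap.coe_coe, map_sub, hQfix (Q x) (hQmem x), sub_self]
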